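/- Let c and q be primes such that either (c is odd, q ≡ 3 (mod 8), and the Legendre symbol (c/q) = 1) or (c = 2 and q ≡ 7 (mod 8)). Then there exist rational numbers x and y with y ≠ 0 such that x² + q·y² = c. -/

import Mathlib

open Finset

/-- A prime times a nonzero square is never a square (in `ℤ`). -/
lemma aux_sq_ne_prime_mul_sq {p : ℕ} (hp : p.Prime) (a b : ℤ) (hb : b ≠ 0) :
    a ^ 2 ≠ (p : ℤ) * b ^ 2 := by
  intro h
  have hm : a.natAbs ^ 2 = p * b.natAbs ^ 2 := by
    have := congrArg Int.natAbs h
    simpa [Int.natAbs_mul, Int.natAbs_pow] using this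
  have hbn : b.natAbs ≠ 0 := Int.natAbs_ne_zero.mpr hb
  have han : a.natAbs ≠ 0 := by
    intro h0
    rw [h0] at hm
    have h1 : p * b.natAbs ^ 2 = 0 := by simpa using hm.symm
    exact Nat.mul_ne_zero hp.ne_zero (pow_ne_zero 2 hbn) h1
  have h1 : (a.natAbs ^ 2).factorization p = 2 * a.natAbs.factorization p := by
    rw [Nat.factorization_pow]; simp
  have h2 : (p * b.natAbs ^ 2).factorization p = 1 + 2 * b.natAbs.factorization p := by
    rw [Nat.factorization_mul hp.ne_zero (pow_ne_zero _ hbn), Nat.factorization_pow]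
    simp [hp.factorization]
  rw [hm, h2] at h1
  omega

/-- The product of two distinct primes is never a square (in `ℤ`). -/
lemma aux_sq_ne_two_primes {p c : ℕ} (hp : p.Prime) (hc : c.Prime) (hne : p ≠ c) (x : ℤ) :
    x ^ 2 ≠ (p : ℤ) * c := by
  intro h
  have hm : x.natAbs ^ 2 = p * c := by
    have := congrArg Int.natAbs h
    simpa [Int.natAbs_mul, Int.natAbs_pow] using this
  have hdvd : p ∣ x.natAbs := by
    refine hp.dvd_of_dvd_pow (n := 2) ?_
    rw [hm]; exact Dvd.intro _ rfl
  obtain ⟨m, hmm⟩ := hdvd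
  rw [hmm, mul_pow] at hm
  have hqc : p * m ^ 2 = c := by
    refine Nat.eq_of_mul_eq_mul_left hp.pos ?_
    rw [← hm]; ring
  have hpc : p ∣ c := ⟨m ^ 2, hqc.symm⟩
  rcases Nat.Prime.eq_one_or_self_of_dvd hc p hpc with h1 | h1
  · exact hp.one_lt.ne' h1
  · exact hne h1

set_option maxHeartbeats 1000000 in
/-- Main construction: given square roots of `-q` mod `c` and of `c` mod `q`, a pigeonhole
argument produces a rational point on `x² + q y² = c` with `y ≠ 0`. -/
lemma aux_main_construction (c q : ℕ) (hc : c.Prime) (hq : q.Prime) (hne : q ≠ c)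
    (s r : ℤ) (hs : (c : ℤ) ∣ s ^ 2 + q) (hr : (q : ℤ) ∣ r ^ 2 - c) :
    ∃ x y : ℚ, y ≠ 0 ∧ x ^ 2 + (q : ℚ) * y ^ 2 = (c : ℚ) := by
  haveI : NeZero c := ⟨hc.ne_zero⟩
  haveI : NeZero q := ⟨hq.ne_zero⟩
  set X := Nat.sqrt (q * c) with hX
  set Y := Nat.sqrt c with hY
  set Z := Nat.sqrt q with hZ
  -- the pigeonhole map
  set g : ℕ × ℕ × ℕ → ZMod c × ZMod q :=
    fun t => ((t.1 : ZMod c) - (s : ZMod c) * (t.2.1 : ZMod c),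
              (t.1 : ZMod q) - (r : ZMod q) * (t.2.2 : ZMod q)) with hg
  set S : Finset (ℕ × ℕ × ℕ) :=
    (range (X + 1)) ×ˢ (range (Y + 1)) ×ˢ (range (Z + 1)) with hS
  have hcardS : S.card = (X + 1) * ((Y + 1) * (Z + 1)) := by
    simp [hS, Finset.card_product]
  have hcardT : (Finset.univ : Finset (ZMod c × ZMod q)).card = c * q := by
    simp [Fintype.card_prod, ZMod.card]
  have hlt : (Finset.univ : Finset (ZMod c × ZMod q)).card < S.card := by
    rw [hcardT, hcardS]
    have h1 : q * c < (X + 1) ^ 2 := Nat.lt_succ_sqrt' (q * c)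
    have h2 : c < (Y + 1) ^ 2 := Nat.lt_succ_sqrt' c
    have h3 : q < (Z + 1) ^ 2 := Nat.lt_succ_sqrt' q
    by_contra hcon
    push_neg at hcon
    have hsq : ((X + 1) * ((Y + 1) * (Z + 1))) ^ 2 ≤ (c * q) ^ 2 :=
      Nat.pow_le_pow_left hcon 2
    have hbig : (c * q) ^ 2 < ((X + 1) * ((Y + 1) * (Z + 1))) ^ 2 := by
      have hstep : (q * c) * (c * q) < (X + 1) ^ 2 * ((Y + 1) ^ 2 * (Z + 1) ^ 2) := by
        apply Nat.mul_lt_mul_of_lt_of_le h1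
        · exact le_of_lt (Nat.mul_lt_mul_of_lt_of_le h2 (le_of_lt h3) (by positivity))
        · positivity
      calc (c * q) ^ 2 = (q * c) * (c * q) := by ring
        _ < (X + 1) ^ 2 * ((Y + 1) ^ 2 * (Z + 1) ^ 2) := hstep
        _ = ((X + 1) * ((Y + 1) * (Z + 1))) ^ 2 := by ring
    omega
  obtain ⟨t₁, ht₁, t₂, ht₂, htne, hteq⟩ :=
    Finset.exists_ne_map_eq_of_card_lt_of_maps_to hlt
      (fun a _ => Finset.mem_univ (g a))
  -- unpack memberships
  simp only [hS, Finset.mem_product, Finset.mem_range] at ht₁ ht₂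
  obtain ⟨h1a, h1b, h1c⟩ := ht₁
  obtain ⟨h2a, h2b, h2c⟩ := ht₂
  set x : ℤ := (t₁.1 : ℤ) - (t₂.1 : ℤ) with hx
  set y : ℤ := (t₁.2.1 : ℤ) - (t₂.2.1 : ℤ) with hy
  set z : ℤ := (t₁.2.2 : ℤ) - (t₂.2.2 : ℤ) with hz
  have hnz : ¬(x = 0 ∧ y = 0 ∧ z = 0) := by
    rintro ⟨hx0, hy0, hz0⟩
    apply htne
    have e1 : t₁.1 = t₂.1 := by omega
    have e2 : t₁.2.1 = t₂.2.1 := by omega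
    have e3 : t₁.2.2 = t₂.2.2 := by omega
    exact Prod.ext e1 (Prod.ext e2 e3)
  -- bounds
  have hxb : x ^ 2 ≤ (q : ℤ) * c := by
    have hb1 : x ≤ (X : ℤ) := by omega
    have hb2 : -(X : ℤ) ≤ x := by omega
    have hX2 : (X : ℤ) ^ 2 ≤ (q : ℤ) * c := by exact_mod_cast Nat.sqrt_le' (q * c)
    calc x ^ 2 ≤ (X : ℤ) ^ 2 := sq_le_sq' hb2 hb1
      _ ≤ (q : ℤ) * c := hX2
  have hyb : y ^ 2 ≤ (c : ℤ) := by
    have hb1 : y ≤ (Y : ℤ) := by omega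
    have hb2 : -(Y : ℤ) ≤ y := by omega
    calc y ^ 2 ≤ (Y : ℤ) ^ 2 := sq_le_sq' hb2 hb1
      _ ≤ (c : ℤ) := by exact_mod_cast Nat.sqrt_le' c
  have hzb : z ^ 2 ≤ (q : ℤ) := by
    have hb1 : z ≤ (Z : ℤ) := by omega
    have hb2 : -(Z : ℤ) ≤ z := by omega
    calc z ^ 2 ≤ (Z : ℤ) ^ 2 := sq_le_sq' hb2 hb1
      _ ≤ (q : ℤ) := by exact_mod_cast Nat.sqrt_le' q
  -- congruences
  have hgeq := hteq
  rw [hg] at hgeq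
  have hgc : (t₁.1 : ZMod c) - (s : ZMod c) * (t₁.2.1 : ZMod c)
      = (t₂.1 : ZMod c) - (s : ZMod c) * (t₂.2.1 : ZMod c) := congrArg Prod.fst hgeq
  have hgq : (t₁.1 : ZMod q) - (r : ZMod q) * (t₁.2.2 : ZMod q)
      = (t₂.1 : ZMod q) - (r : ZMod q) * (t₂.2.2 : ZMod q) := congrArg Prod.snd hgeq
  set f : ℤ := x ^ 2 + q * y ^ 2 - c * z ^ 2 with hf
  have hfc : (c : ℤ) ∣ f := by
    rw [← ZMod.intCast_zmod_eq_zero_iff_dvd]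
    have e1 : ((x - s * y : ℤ) : ZMod c) = 0 := by
      push_cast [hx, hy]
      linear_combination hgc
    have e2 : ((s ^ 2 + q : ℤ) : ZMod c) = 0 := by
      rw [ZMod.intCast_zmod_eq_zero_iff_dvd]; exact hs
    have e3 : ((c : ℤ) : ZMod c) = 0 := by
      rw [ZMod.intCast_zmod_eq_zero_iff_dvd]
    push_cast [hf]
    push_cast at e1 e2 e3
    linear_combination ((x : ZMod c) + (s : ZMod c) * (y : ZMod c)) * e1
      + ((y : ZMod c) ^ 2) * e2 - ((z : ZMod c) ^ 2) * e3
  have hfq : (q : ℤ) ∣ f := by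
    rw [← ZMod.intCast_zmod_eq_zero_iff_dvd]
    have e1 : ((x - r * z : ℤ) : ZMod q) = 0 := by
      push_cast [hx, hz]
      linear_combination hgq
    have e2 : ((r ^ 2 - c : ℤ) : ZMod q) = 0 := by
      rw [ZMod.intCast_zmod_eq_zero_iff_dvd]; exact hr
    have e3 : ((q : ℤ) : ZMod q) = 0 := by
      rw [ZMod.intCast_zmod_eq_zero_iff_dvd]
    push_cast [hf]
    push_cast at e1 e2 e3
    linear_combination ((x : ZMod q) + (r : ZMod q) * (z : ZMod q)) * e1
      + ((z : ZMod q) ^ 2) * e2 + ((y : ZMod q) ^ 2) * e3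
  have hcop : IsCoprime (c : ℤ) (q : ℤ) :=
    Nat.isCoprime_iff_coprime.mpr ((Nat.coprime_primes hc hq).mpr hne.symm)
  have hdvd : ((c : ℤ) * q) ∣ f := hcop.mul_dvd hfc hfq
  obtain ⟨k, hk⟩ := hdvd
  have hc0 : (0 : ℤ) < (c : ℤ) := by exact_mod_cast hc.pos
  have hq0 : (0 : ℤ) < (q : ℤ) := by exact_mod_cast hq.pos
  have hcq0 : (0 : ℤ) < (c : ℤ) * q := mul_pos hc0 hq0
  have hcz : (c : ℤ) * z ^ 2 ≤ (c : ℤ) * q := mul_le_mul_of_nonneg_left hzb hc0.le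
  have hqy : (q : ℤ) * y ^ 2 ≤ (q : ℤ) * c := mul_le_mul_of_nonneg_left hyb hq0.le
  have hqynn : (0 : ℤ) ≤ (q : ℤ) * y ^ 2 := mul_nonneg hq0.le (sq_nonneg y)
  have hcznn : (0 : ℤ) ≤ (c : ℤ) * z ^ 2 := mul_nonneg hc0.le (sq_nonneg z)
  -- bound on f
  have hflb : -((c : ℤ) * q) ≤ f := by
    simp only [hf]
    linarith [sq_nonneg x]
  have hfub : f ≤ 2 * ((c : ℤ) * q) := by
    simp only [hf]
    have : (q : ℤ) * c = (c : ℤ) * q := by ring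
    linarith [hxb]
  have hkrange : k = -1 ∨ k = 0 ∨ k = 1 ∨ k = 2 := by
    rw [hk] at hflb hfub
    have h1 : -1 ≤ k := by
      by_contra hcon
      push_neg at hcon
      have hk2 : k ≤ -2 := by omega
      have : (c : ℤ) * q * k ≤ (c : ℤ) * q * (-2) := mul_le_mul_of_nonneg_left hk2 hcq0.le
      linarith
    have h2 : k ≤ 2 := by
      by_contra hcon
      push_neg at hcon
      have hk2 : (3 : ℤ) ≤ k := by omega
      have : (c : ℤ) * q * 3 ≤ (c : ℤ) * q * k := mul_le_mul_of_nonneg_left hk2 hcq0.le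
      linarith
    omega
  rcases hkrange with hk1 | hk1 | hk1 | hk1
  · -- k = -1 : impossible
    exfalso
    rw [hk1, mul_neg_one] at hk
    simp only [hf] at hk
    have hx2 : x ^ 2 = 0 := le_antisymm (by linarith) (sq_nonneg x)
    have hqy2 : (q : ℤ) * y ^ 2 = 0 := le_antisymm (by linarith [sq_nonneg x]) hqynn
    have hy2 : y ^ 2 = 0 := by
      rcases mul_eq_zero.mp hqy2 with h | h
      · exact absurd h hq0.ne'
      · exact h
    have hz2 : z ^ 2 = (q : ℤ) := by
      have hcc : (c : ℤ) * z ^ 2 = (c : ℤ) * q := by linarith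
      exact mul_left_cancel₀ hc0.ne' hcc
    have : z ^ 2 = (q : ℤ) * 1 ^ 2 := by rw [hz2]; ring
    exact aux_sq_ne_prime_mul_sq hq z 1 one_ne_zero this
  · -- k = 0 : x² + q y² = c z²
    rw [hk1, mul_zero] at hk
    have heq : x ^ 2 + (q : ℤ) * y ^ 2 = (c : ℤ) * z ^ 2 := by
      simp only [hf] at hk; linarith
    have hz0 : z ≠ 0 := by
      intro h0
      rw [h0] at heq
      simp only [ne_eq, OfNat.ofNat_ne_zero, not_false_eq_true, zero_pow, mul_zero] at heq
      have hx2 : x ^ 2 = 0 := le_antisymm (by linarith) (sq_nonneg x)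
      have hqy2 : (q : ℤ) * y ^ 2 = 0 := le_antisymm (by linarith [sq_nonneg x]) hqynn
      have hy2 : y ^ 2 = 0 := by
        rcases mul_eq_zero.mp hqy2 with h | h
        · exact absurd h hq0.ne'
        · exact h
      exact hnz ⟨pow_eq_zero_iff two_ne_zero |>.mp hx2,
        pow_eq_zero_iff two_ne_zero |>.mp hy2, h0⟩
    have hy0 : y ≠ 0 := by
      intro h0
      rw [h0] at heq
      have : x ^ 2 = (c : ℤ) * z ^ 2 := by
        simpa using heq
      exact aux_sq_ne_prime_mul_sq hc x z hz0 this
    refine ⟨(x : ℚ) / (z : ℚ), (y : ℚ) / (z : ℚ), ?_, ?_⟩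
    · exact div_ne_zero (by exact_mod_cast hy0) (by exact_mod_cast hz0)
    · have hzq : (z : ℚ) ≠ 0 := by exact_mod_cast hz0
      have heqq : (x : ℚ) ^ 2 + (q : ℚ) * (y : ℚ) ^ 2 = (c : ℚ) * (z : ℚ) ^ 2 := by
        exact_mod_cast heq
      field_simp
      linear_combination heqq
  · -- k = 1 : x² + q y² = c (z² + q)
    rw [hk1, mul_one] at hk
    have heq : x ^ 2 + (q : ℤ) * y ^ 2 = (c : ℤ) * (z ^ 2 + q) := by
      simp only [hf] at hk; ring_nf; ring_nf at hk; linarith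
    have hD0 : (0 : ℤ) < z ^ 2 + q := by positivity
    have hYnum : y * z - x ≠ 0 := by
      intro h0
      have hxz : x = y * z := by linarith
      have hcanc : y ^ 2 * (z ^ 2 + q) = (c : ℤ) * (z ^ 2 + q) := by
        rw [hxz] at heq; ring_nf; ring_nf at heq; linarith
      have hy2 : y ^ 2 = (c : ℤ) := mul_right_cancel₀ hD0.ne' hcanc
      have : y ^ 2 = (c : ℤ) * 1 ^ 2 := by rw [hy2]; ring
      exact aux_sq_ne_prime_mul_sq hc y 1 one_ne_zero this
    have hDq : ((z : ℚ) ^ 2 + (q : ℚ)) ≠ 0 := by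
      have hqq : (0 : ℚ) < (q : ℚ) := by exact_mod_cast hq.pos
      positivity
    refine ⟨((x * z + q * y : ℤ) : ℚ) / ((z : ℚ) ^ 2 + (q : ℚ)),
      ((y * z - x : ℤ) : ℚ) / ((z : ℚ) ^ 2 + (q : ℚ)), ?_, ?_⟩
    · exact div_ne_zero (by exact_mod_cast hYnum) hDq
    · have heqq : (x : ℚ) ^ 2 + (q : ℚ) * (y : ℚ) ^ 2
          = (c : ℚ) * ((z : ℚ) ^ 2 + (q : ℚ)) := by exact_mod_cast heq
      field_simp
      push_cast
      linear_combination ((z : ℚ) ^ 2 + (q : ℚ)) * heqq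
  · -- k = 2 : impossible
    exfalso
    rw [hk1] at hk
    simp only [hf] at hk
    have hqc : (q : ℤ) * c = (c : ℤ) * q := by ring
    have hz2 : z ^ 2 = 0 := by
      have hcz2 : (c : ℤ) * z ^ 2 ≤ 0 := by linarith
      have := mul_nonneg hc0.le (sq_nonneg z)
      have hzz : (c : ℤ) * z ^ 2 = 0 := le_antisymm hcz2 this
      rcases mul_eq_zero.mp hzz with h | h
      · exact absurd h hc0.ne'
      · exact h
    have hx2 : x ^ 2 = (q : ℤ) * c := by
      rw [hz2] at hk
      linarith
    exact aux_sq_ne_two_primes hq hc hne x hx2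

/-- If `c` and `q` are primes with either (`c` odd, `q ≡ 3 (mod 8)`, `(c/q) = 1`) or
(`c = 2`, `q ≡ 7 (mod 8)`), then `x² + q·y² = c` has a rational solution with `y ≠ 0`. -/
theorem exists_rat_sol_x_sq_add_q_y_sq_eq_c (c q : ℕ) (hc : c.Prime) (hq : q.Prime)
    (hcond : (Odd c ∧ q % 8 = 3 ∧ @legendreSym q ⟨hq⟩ (c : ℤ) = 1) ∨
      (c = 2 ∧ q % 8 = 7)) :
    ∃ x y : ℚ, y ≠ 0 ∧ x ^ 2 + (q : ℚ) * y ^ 2 = (c : ℚ) := by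
  haveI hqf : Fact q.Prime := ⟨hq⟩
  haveI hcf : Fact c.Prime := ⟨hc⟩
  rcases hcond with ⟨hodd, hq8, hleg⟩ | ⟨hc2, hq8⟩
  · -- odd case
    have hq2 : q ≠ 2 := by intro h; rw [h] at hq8; norm_num at hq8
    have hc2 : c ≠ 2 := by
      intro h; rw [h] at hodd
      exact (Nat.not_odd_iff_even.mpr (by norm_num)) hodd
    have hq4 : q % 4 = 3 := by omega
    -- c ≠ q
    have hne : q ≠ c := by
      intro h
      rw [← h] at hleg
      have h0 : ((q : ℤ) : ZMod q) = 0 := by simp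
      rw [legendreSym.eq_zero_iff q _ |>.mpr h0] at hleg
      norm_num at hleg
    -- r : square root of c mod q
    have hc0q : ((c : ℤ) : ZMod q) ≠ 0 := by
      intro h0
      rw [legendreSym.eq_zero_iff q _ |>.mpr h0] at hleg
      norm_num at hleg
    have hsqc : IsSquare ((c : ℤ) : ZMod q) := (legendreSym.eq_one_iff q hc0q).mp hleg
    obtain ⟨t, ht⟩ := hsqc
    have ht' : ((c : ℕ) : ZMod q) = t * t := by exact_mod_cast ht
    have hr : (q : ℤ) ∣ (t.val : ℤ) ^ 2 - c := by
      rw [← ZMod.intCast_zmod_eq_zero_iff_dvd]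
      push_cast
      rw [ZMod.natCast_val, ZMod.cast_id, sq, ht', sub_self]
    -- legendreSym c (-q) = 1
    have hlegc : legendreSym c (-(q : ℤ)) = 1 := by
      have hmul : legendreSym c (-(q : ℤ)) = legendreSym c (-1) * legendreSym c q := by
        rw [← legendreSym.mul]; norm_num
      rw [hmul, legendreSym.at_neg_one hc2]
      have hcodd : c % 2 = 1 := Nat.odd_iff.mp hodd
      have hc4 : c % 4 = 1 ∨ c % 4 = 3 := by omega
      rcases hc4 with h4 | h4
      · rw [ZMod.χ₄_nat_one_mod_four h4]
        have hrec := legendreSym.quadratic_reciprocity_one_mod_four (p := c) (q := q) h4 hq2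
        rw [hleg] at hrec
        rw [← hrec]; norm_num
      · rw [ZMod.χ₄_nat_three_mod_four h4]
        have hrec := legendreSym.quadratic_reciprocity_three_mod_four (p := c) (q := q) h4 hq4
        rw [hleg] at hrec
        have hval : legendreSym c (q : ℤ) = -1 := by linarith
        rw [hval]; norm_num
    have hnq0 : ((-(q : ℤ) : ℤ) : ZMod c) ≠ 0 := by
      intro h0
      rw [legendreSym.eq_zero_iff c _ |>.mpr h0] at hlegc
      norm_num at hlegc
    have hsqnq : IsSquare ((-(q : ℤ) : ℤ) : ZMod c) := (legendreSym.eq_one_iff c hnq0).mp hlegc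
    obtain ⟨u, hu⟩ := hsqnq
    have hu' : -((q : ℕ) : ZMod c) = u * u := by
      rw [← hu]; push_cast; ring
    have hs : (c : ℤ) ∣ (u.val : ℤ) ^ 2 + q := by
      rw [← ZMod.intCast_zmod_eq_zero_iff_dvd]
      push_cast
      rw [ZMod.natCast_val, ZMod.cast_id, sq, ← hu']
      ring
    exact aux_main_construction c q hc hq hne _ _ hs hr
  · -- c = 2 case
    subst hc2
    have hq2 : q ≠ 2 := by intro h; rw [h] at hq8; norm_num at hq8
    have hs : ((2 : ℕ) : ℤ) ∣ (1 : ℤ) ^ 2 + q := by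
      simp only [one_pow]
      omega
    have hsq2 : IsSquare (2 : ZMod q) := by
      rw [ZMod.exists_sq_eq_two_iff hq2]
      right; exact hq8
    obtain ⟨t, ht⟩ := hsq2
    have hr : (q : ℤ) ∣ (t.val : ℤ) ^ 2 - ((2 : ℕ) : ℤ) := by
      rw [← ZMod.intCast_zmod_eq_zero_iff_dvd]
      push_cast
      rw [ZMod.natCast_val, ZMod.cast_id, sq, ← ht]
      norm_num
    have hmain := aux_main_construction 2 q (by norm_num) hq hq2 1 (t.val : ℤ) hs hr
    exact_mod_cast hmain
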